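/- Let G be a simple graph with n ≥ 3 vertices, m edges, all degrees positive, maximum degree Δ and minimum degree δ (attained at two distinct vertices). Then ID(G) − 1/Δ − 1/δ ≥ (n−2)²/(2m − Δ − δ). -/
import Mathlib


open Finset

theorem stmt18 {V : Type*} [Fintype V] [DecidableEq V] (G : SimpleGraph V)
    [DecidableRel G.Adj] (hn : 3 ≤ Fintype.card V)
    (hdeg : ∀ v : V, 0 < G.degree v) (m : ℕ) (hm : m = G.edgeFinset.card)
    (Δ δ : ℕ) (hΔ₁ : ∀ v : V, G.degree v ≤ Δ) (hδ₁ : ∀ v : V, δ ≤ G.degree v)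
    (hattain : ∃ u v : V, u ≠ v ∧ G.degree u = Δ ∧ G.degree v = δ) :
    (∑ v : V, 1 / (G.degree v : ℝ)) - 1 / (Δ : ℝ) - 1 / (δ : ℝ) ≥
      ((Fintype.card V : ℝ) - 2) ^ 2 / (2 * (m : ℝ) - (Δ : ℝ) - (δ : ℝ)) := by
  obtain ⟨u, v, huv, hu, hv⟩ := hattain
  set s : Finset V := Finset.univ \ {u, v} with hs
  have hsub : ({u, v} : Finset V) ⊆ Finset.univ := subset_univ _
  have hcardp : ({u, v} : Finset V).card = 2 := card_pair huv
  have hcards : (s.card : ℝ) = (Fintype.card V : ℝ) - 2 := by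
    rw [hs, card_sdiff_of_subset hsub, hcardp]
    have : 2 ≤ Fintype.card V := by omega
    rw [card_univ]
    push_cast [Nat.cast_sub this]
    ring
  -- sum of degrees split
  have hsum_deg : ∑ w : V, (G.degree w : ℝ) = 2 * m := by
    rw [hm]
    rw [← Nat.cast_sum]
    rw [SimpleGraph.sum_degrees_eq_twice_card_edges]
    push_cast; ring
  have hsplit : ∀ f : V → ℝ, ∑ w : V, f w = (∑ w ∈ s, f w) + (f u + f v) := by
    intro f
    rw [hs, ← Finset.sum_pair huv, Finset.sum_sdiff hsub]
  have hdegs : ∑ w ∈ s, (G.degree w : ℝ) = 2 * (m : ℝ) - Δ - δ := by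
    have := hsplit (fun w => (G.degree w : ℝ))
    simp only [hu, hv] at this
    rw [hsum_deg] at this
    linarith
  have hinvs : (∑ w : V, 1 / (G.degree w : ℝ)) - 1 / (Δ : ℝ) - 1 / (δ : ℝ)
      = ∑ w ∈ s, 1 / (G.degree w : ℝ) := by
    have := hsplit (fun w => 1 / (G.degree w : ℝ))
    simp only [hu, hv] at this
    rw [this]; ring
  have key : ((s.card : ℝ)) ^ 2 / (∑ w ∈ s, (G.degree w : ℝ))
      ≤ ∑ w ∈ s, 1 / (G.degree w : ℝ) := by
    have h := Finset.sq_sum_div_le_sum_sq_div s (fun _ => (1 : ℝ))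
      (g := fun w => (G.degree w : ℝ)) (fun i _ => by simp; exact_mod_cast hdeg i)
    simpa using h
  rw [hinvs, ← hdegs, ← hcards]
  exact key
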